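/- Let g : ℝ₊ × ℝ → ℝ≥0 be measurable, supported in a set S, and suppose that for some r₀ ≥ 10λ > 0 the total mass is M = ∫_S g(r,z) r³ dr dz, with g extended to an SO(4)-radial function G on ℝ⁵. Then for every X₀ ∈ ℝ⁵ whose first-four-coordinate norm is r₀, the integral of G over the Euclidean ball B_λ(X₀) ⊂ ℝ⁵ (with respect to Lebesgue measure, normalized so the full angular integral gives 2π² M) is at most C (λ/r₀)³ · 2π² M for an absolute constant C. -/

import Mathlib

open MeasureTheory Set
open scoped ENNReal

/-- The distance to the symmetry axis: norm of the first four coordinates. -/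
noncomputable def rad5 (x : EuclideanSpace ℝ (Fin 5)) : ℝ :=
  Real.sqrt (∑ i : Fin 4, x i.castSucc ^ 2)

/-- The height (last) coordinate. -/
def ht5 (x : EuclideanSpace ℝ (Fin 5)) : ℝ := x 4

open Metric
open scoped Pointwise RealInnerProductSpace

noncomputable abbrev E4' := EuclideanSpace ℝ (Fin 4)

set_option maxHeartbeats 1000000 in
lemma cone_vol (p : E4') (hp : ‖p‖ = 1) {ε : ℝ} (hε : 0 < ε) (hε1 : ε ≤ 1) :
    volume (Ioo (0:ℝ) 1 • {x : E4' | ‖x‖ = 1 ∧ dist x p < ε}) ≤ ENNReal.ofReal (8 * ε ^ 3) := by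
  classical
  set e0 : E4' := EuclideanSpace.single 0 1 with he0
  have he0n : ‖e0‖ = 1 := by simp [he0]
  set R := Submodule.reflection (ℝ ∙ (p - e0))ᗮ with hR
  have hRp : R p = e0 := Submodule.reflection_sub (by rw [hp, he0n])
  set B : Fin 4 → Set ℝ := fun i => if i = 0 then Ioo (0:ℝ) 1 else Ioo (-ε) ε with hB
  set T : Set E4' := (fun x => ((MeasurableEquiv.toLp 2 (Fin 4 → ℝ)).symm) (R x)) ⁻¹' (univ.pi B)
    with hT
  have hsub : Ioo (0:ℝ) 1 • {x : E4' | ‖x‖ = 1 ∧ dist x p < ε} ⊆ T := by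
    rintro x hx
    rw [Set.mem_smul] at hx
    obtain ⟨t, ht, ω, hω, rfl⟩ := hx
    obtain ⟨hω1, hωp⟩ := hω
    rw [dist_eq_norm] at hωp
    have hip : ⟪ω, p⟫ = 1 - ‖ω - p‖ ^ 2 / 2 := by
      have := norm_sub_sq_real ω p
      rw [hω1, hp] at this
      linarith
    have hip1 : ⟪ω, p⟫ ≤ 1 := by
      calc ⟪ω, p⟫ ≤ ‖ω‖ * ‖p‖ := real_inner_le_norm ω p
      _ = 1 := by rw [hω1, hp]; ring
    have hippos : 0 < ⟪ω, p⟫ := by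
      have : ‖ω - p‖ ^ 2 < ε ^ 2 := by
        apply sq_lt_sq' _ hωp
        nlinarith [norm_nonneg (ω - p)]
      nlinarith
    have hRx0 : (R (t • ω)) 0 = t * ⟪ω, p⟫ := by
      have h1 : ⟪R (t • ω), e0⟫ = ⟪t • ω, p⟫ := by
        rw [← hRp]; exact R.inner_map_map _ _
      have h2 : ⟪R (t • ω), e0⟫ = (R (t • ω)) 0 := by
        rw [he0]
        rw [EuclideanSpace.inner_single_right]
        simp
      rw [← h2, h1, real_inner_smul_left]
    have hnormRx : ‖R (t • ω)‖ = t := by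
      rw [R.norm_map, norm_smul, hω1, Real.norm_eq_abs, abs_of_pos ht.1, mul_one]
    intro i _
    simp only [hB]
    by_cases hi : i = 0
    · subst hi
      simp only [if_pos rfl]
      have : ((MeasurableEquiv.toLp 2 (Fin 4 → ℝ)).symm) (R (t • ω)) 0 = (R (t • ω)) 0 := rfl
      rw [this, hRx0]
      refine ⟨mul_pos ht.1 hippos, ?_⟩
      have := mul_le_mul_of_nonneg_left hip1 ht.1.le
      nlinarith [ht.2]
    · simp only [if_neg hi]
      have hcoord : ((MeasurableEquiv.toLp 2 (Fin 4 → ℝ)).symm) (R (t • ω)) i = (R (t • ω)) i := rfl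
      rw [hcoord]
      have hsum : (R (t • ω)) 0 ^ 2 + (R (t • ω)) i ^ 2 ≤ ‖R (t • ω)‖ ^ 2 := by
        rw [EuclideanSpace.norm_eq, Real.sq_sqrt (by positivity)]
        simp only [Real.norm_eq_abs, sq_abs]
        have : ({0, i} : Finset (Fin 4)).sum (fun j => (R (t • ω)) j ^ 2)
            ≤ ∑ j : Fin 4, (R (t • ω)) j ^ 2 :=
          Finset.sum_le_sum_of_subset_of_nonneg (Finset.subset_univ _)
            (fun j _ _ => sq_nonneg _)
        rwa [Finset.sum_pair (fun h => hi h.symm)] at this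
      have h2 : (R (t • ω)) i ^ 2 < ε ^ 2 := by
        rw [hnormRx, hRx0] at hsum
        have h1int : ⟪ω, p⟫ ^ 2 ≤ 1 := by nlinarith
        have ht2 : t ^ 2 ≤ 1 := by nlinarith [ht.1, ht.2]
        have hup : t ^ 2 * (1 - ⟪ω, p⟫ ^ 2) ≤ 1 - ⟪ω, p⟫ ^ 2 := by
          nlinarith [mul_nonneg (sub_nonneg.2 ht2) (sub_nonneg.2 h1int)]
        have hsq : ‖ω - p‖ ^ 2 < ε ^ 2 := by
          apply sq_lt_sq' _ hωp
          nlinarith [norm_nonneg (ω - p)]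
        nlinarith
      constructor <;> nlinarith [h2, hε]
  calc volume (Ioo (0:ℝ) 1 • {x : E4' | ‖x‖ = 1 ∧ dist x p < ε}) ≤ volume T :=
        measure_mono hsub
    _ = volume (univ.pi B) := by
        rw [hT]
        have : (fun x : E4' => ((MeasurableEquiv.toLp 2 (Fin 4 → ℝ)).symm) (R x))
            = ((MeasurableEquiv.toLp 2 (Fin 4 → ℝ)).symm) ∘ R := rfl
        have hBm : MeasurableSet (univ.pi B) := by
          apply MeasurableSet.univ_pi
          intro i
          by_cases hi : i = 0 <;> simp only [hB, hi, if_true, if_false,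
            reduceIte] <;> exact measurableSet_Ioo
        rw [this, Set.preimage_comp]
        rw [R.measurePreserving.measure_preimage
          ((hBm.preimage ((MeasurableEquiv.toLp 2 (Fin 4 → ℝ)).symm).measurable).nullMeasurableSet)]
        exact (EuclideanSpace.volume_preserving_symm_measurableEquiv_toLp (Fin 4)).measure_preimage
          hBm.nullMeasurableSet
    _ ≤ ENNReal.ofReal (8 * ε ^ 3) := by
        rw [volume_pi_pi]
        have : ∀ i : Fin 4, volume (B i) = if i = 0 then ENNReal.ofReal 1
            else ENNReal.ofReal (2 * ε) := by
          intro i; by_cases hi : i = 0 <;> simp [hB, hi, Real.volume_Ioo] <;> ring_nf <;> rw [ENNReal.ofReal_mul' (by norm_num)] <;> norm_num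
        rw [Finset.prod_congr rfl (fun i _ => this i), Fin.prod_univ_four]
        rw [if_pos rfl, if_neg (by decide), if_neg (by decide), if_neg (by decide)]
        rw [← ENNReal.ofReal_mul (by norm_num), ← ENNReal.ofReal_mul (by positivity),
          ← ENNReal.ofReal_mul (by positivity)]
        apply ENNReal.ofReal_le_ofReal; nlinarith

lemma toSphere_cap_le (p : E4') (hp : ‖p‖ = 1) {ε : ℝ} (hε : 0 < ε) (hε1 : ε ≤ 1) :
    volume.toSphere {ω : sphere (0:E4') 1 | dist (ω : E4') p < ε}
      ≤ ENNReal.ofReal (32 * ε ^ 3) := by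
  have hms : MeasurableSet {ω : sphere (0:E4') 1 | dist (ω : E4') p < ε} := by
    have : {ω : sphere (0:E4') 1 | dist (ω : E4') p < ε}
        = (Subtype.val) ⁻¹' (Metric.ball p ε) := rfl
    rw [this]
    exact measurableSet_ball.preimage measurable_subtype_coe
  rw [Measure.toSphere_apply' _ hms]
  have hdim : Module.finrank ℝ E4' = 4 := finrank_euclideanSpace_fin
  rw [hdim]
  have himg : (Subtype.val '' {ω : sphere (0:E4') 1 | dist (ω : E4') p < ε})
      ⊆ {x : E4' | ‖x‖ = 1 ∧ dist x p < ε} := by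
    rintro x ⟨ω, hω, rfl⟩
    exact ⟨mem_sphere_zero_iff_norm.1 ω.2, hω⟩
  calc (4 : ℝ≥0∞) * volume (Ioo (0:ℝ) 1 • (Subtype.val '' {ω : sphere (0:E4') 1 | dist (ω : E4') p < ε}))
      ≤ 4 * volume (Ioo (0:ℝ) 1 • {x : E4' | ‖x‖ = 1 ∧ dist x p < ε}) := by
        exact mul_le_mul_right (measure_mono (Set.smul_subset_smul_left himg)) _
    _ ≤ 4 * ENNReal.ofReal (8 * ε ^ 3) := by gcongr; exact cone_vol p hp hε hε1
    _ = ENNReal.ofReal (32 * ε ^ 3) := by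
        rw [show (4 : ℝ≥0∞) = ENNReal.ofReal 4 from by norm_num,
          ← ENNReal.ofReal_mul (by norm_num)]
        ring_nf

set_option maxHeartbeats 1000000 in
lemma ball_lintegral_le (h : ℝ → ℝ≥0∞) (hh : Measurable h) (c : E4') {r₀ lam : ℝ}
    (hlam : 0 < lam) (hr : 10 * lam ≤ r₀) (hc : ‖c‖ = r₀) :
    ∫⁻ x in Metric.ball c lam, h ‖x‖ ∂volume
      ≤ ENNReal.ofReal (256 * (lam / r₀) ^ 3)
        * ∫⁻ r in Ioi (0:ℝ), h r * ENNReal.ofReal (r ^ 3) ∂volume := by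
  have hr₀ : 0 < r₀ := by linarith
  set p : E4' := r₀⁻¹ • c with hpdef
  have hpn : ‖p‖ = 1 := by
    rw [hpdef, norm_smul, hc, Real.norm_eq_abs, abs_of_pos (inv_pos.2 hr₀),
      inv_mul_cancel₀ hr₀.ne']
  set ε : ℝ := 2 * lam / r₀ with hεdef
  have hε : 0 < ε := by positivity
  have hε1 : ε ≤ 1 := by
    rw [hεdef, div_le_one hr₀]; linarith
  -- the cap
  set cap : Set (sphere (0:E4') 1) := {ω | dist (ω : E4') p < ε} with hcap
  have hcapm : MeasurableSet cap :=
    measurableSet_ball.preimage measurable_subtype_coe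
  -- 0 is not in the ball
  have h0 : (0 : E4') ∉ Metric.ball c lam := by
    simp only [Metric.mem_ball, dist_zero_left, not_lt] at *
    rw [hc]; linarith
  have hcompl : MeasurableSet ({(0:E4')}ᶜ) := (measurableSet_singleton _).compl
  -- step 1 : pass to the subtype
  set A : Set ((({0}ᶜ : Set E4'))) := Subtype.val ⁻¹' (Metric.ball c lam) with hA
  have hAm : MeasurableSet A := measurableSet_ball.preimage measurable_subtype_coe
  have step1 : ∫⁻ x in Metric.ball c lam, h ‖x‖ ∂volume
      = ∫⁻ x : (({0}ᶜ : Set E4')), A.indicator (fun x => h ‖(x : E4')‖) x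
          ∂(volume.comap Subtype.val) := by
    rw [lintegral_indicator hAm _]
    rw [setLIntegral_subtype hcompl A (fun x => h ‖x‖)]
    have himg : (Subtype.val '' A) = Metric.ball c lam := by
      rw [hA, Subtype.image_preimage_coe]
      apply Set.inter_eq_self_of_subset_right
      intro x hx
      exact fun h0x => h0 (h0x ▸ hx)
    rw [himg]
  rw [step1]
  -- step 2 : polar coordinates
  have hmp := Measure.measurePreserving_homeomorphUnitSphereProd (volume : Measure E4')
  have hdim : Module.finrank ℝ E4' = 4 := finrank_euclideanSpace_fin
  rw [hdim] at hmp
  set φ := homeomorphUnitSphereProd E4'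
  have hGm : Measurable (fun x : (({0}ᶜ : Set E4')) => A.indicator (fun x => h ‖(x : E4')‖) x) :=
    (hh.comp (continuous_subtype_val.norm.measurable)).indicator hAm
  have hGm' : Measurable fun y : sphere (0:E4') 1 × Ioi (0:ℝ) =>
      A.indicator (fun x => h ‖(x : E4')‖) (φ.symm y) :=
    hGm.comp φ.symm.continuous.measurable
  have step2 : ∫⁻ x : (({0}ᶜ : Set E4')), A.indicator (fun x => h ‖(x : E4')‖) x
        ∂(volume.comap Subtype.val)
      = ∫⁻ y, A.indicator (fun x => h ‖(x : E4')‖) (φ.symm y)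
          ∂((volume.toSphere).prod (Measure.volumeIoiPow 3)) := by
    rw [← hmp.lintegral_comp hGm']
    congr 1
    ext x
    rw [Homeomorph.symm_apply_apply]
  rw [step2]
  -- step 3 : pointwise bound
  have step3 : ∀ y : sphere (0:E4') 1 × Ioi (0:ℝ),
      A.indicator (fun x => h ‖(x : E4')‖) (φ.symm y)
        ≤ cap.indicator 1 y.1 * h y.2.1 := by
    rintro ⟨ω, r⟩
    by_cases hy : φ.symm (ω, r) ∈ A
    · rw [indicator_of_mem hy]
      have hball : (r : ℝ) • (ω : E4') ∈ Metric.ball c lam := hy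
      have hωn : ‖(ω : E4')‖ = 1 := mem_sphere_zero_iff_norm.1 ω.2
      have hrpos : (0:ℝ) < r := r.2
      have hnrω : ‖(r : ℝ) • (ω : E4')‖ = (r : ℝ) := by
        rw [norm_smul, hωn, Real.norm_eq_abs, abs_of_pos hrpos, mul_one]
      have hvalnorm : ‖((φ.symm (ω, r)) : E4')‖ = (r : ℝ) := hnrω
      rw [hvalnorm]
      have hcapmem : ω ∈ cap := by
        rw [Metric.mem_ball, dist_eq_norm] at hball
        have h1 : |(r : ℝ) - r₀| < lam := by
          have := abs_norm_sub_norm_le ((r : ℝ) • (ω : E4')) c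
          rw [hnrω, hc] at this
          exact lt_of_le_of_lt this hball
        have h2 : ‖r₀ • (ω : E4') - c‖ < 2 * lam := by
          calc ‖r₀ • (ω : E4') - c‖
              ≤ ‖r₀ • (ω : E4') - (r : ℝ) • (ω : E4')‖ + ‖(r : ℝ) • (ω : E4') - c‖ := by
                exact norm_sub_le_norm_sub_add_norm_sub _ _ _
            _ = |r₀ - (r : ℝ)| + ‖(r : ℝ) • (ω : E4') - c‖ := by
                rw [← sub_smul, norm_smul, hωn, Real.norm_eq_abs, mul_one]
            _ < lam + lam := by
                rw [abs_sub_comm]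
                exact add_lt_add (by exact h1) hball
            _ = 2 * lam := by ring
        show dist (ω : E4') p < ε
        rw [dist_eq_norm, hpdef]
        have : (ω : E4') - r₀⁻¹ • c = r₀⁻¹ • (r₀ • (ω : E4') - c) := by
          rw [smul_sub, inv_smul_smul₀ hr₀.ne']
        rw [this, norm_smul, Real.norm_eq_abs, abs_of_pos (inv_pos.2 hr₀), hεdef]
        rw [inv_mul_lt_iff₀ hr₀] -- maybe wrong name
        calc ‖r₀ • (ω : E4') - c‖ < 2 * lam := h2
          _ = r₀ * (2 * lam / r₀) := by field_simp
      rw [indicator_of_mem hcapmem]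
      simp
    · rw [indicator_of_notMem hy]
      exact zero_le
  calc ∫⁻ y, A.indicator (fun x => h ‖(x : E4')‖) (φ.symm y)
        ∂((volume.toSphere).prod (Measure.volumeIoiPow 3))
      ≤ ∫⁻ y : sphere (0:E4') 1 × Ioi (0:ℝ), cap.indicator 1 y.1 * h y.2.1
          ∂((volume.toSphere).prod (Measure.volumeIoiPow 3)) :=
        lintegral_mono step3
    _ = (∫⁻ ω, cap.indicator 1 ω ∂volume.toSphere)
          * ∫⁻ r : Ioi (0:ℝ), h r.1 ∂(Measure.volumeIoiPow 3) := by
        exact lintegral_prod_mul ((measurable_one.indicator hcapm).aemeasurable)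
          ((hh.comp measurable_subtype_coe).aemeasurable)
    _ = volume.toSphere cap * ∫⁻ r : Ioi (0:ℝ), h r.1 ∂(Measure.volumeIoiPow 3) := by
        rw [lintegral_indicator_one hcapm]
    _ ≤ ENNReal.ofReal (32 * ε ^ 3) * ∫⁻ r : Ioi (0:ℝ), h r.1 ∂(Measure.volumeIoiPow 3) :=
        mul_le_mul_left (toSphere_cap_le p hpn hε hε1) _
    _ = ENNReal.ofReal (32 * ε ^ 3)
          * ∫⁻ r in Ioi (0:ℝ), h r * ENNReal.ofReal (r ^ 3) ∂volume := by
        congr 1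
        rw [Measure.volumeIoiPow]
        rw [lintegral_withDensity_eq_lintegral_mul _
          ((measurable_subtype_coe.pow_const 3).ennreal_ofReal)
          (show Measurable fun r : Ioi (0:ℝ) => h ↑r from hh.comp measurable_subtype_coe)]
        rw [← lintegral_subtype_comap measurableSet_Ioi]
        congr 1
        ext r
        simp [mul_comm]
    _ ≤ ENNReal.ofReal (256 * (lam / r₀) ^ 3)
          * ∫⁻ r in Ioi (0:ℝ), h r * ENNReal.ofReal (r ^ 3) ∂volume := by
        apply mul_le_mul_left
        apply ENNReal.ofReal_le_ofReal
        rw [hεdef]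
        rw [div_pow, div_pow]
        ring_nf
        nlinarith [pow_pos hr₀ 3, pow_pos hlam 3]

set_option maxHeartbeats 1000000 in
/-- **Quantified off-axis ring capture.** Let `g ≥ 0` be measurable on the
half-plane, supported in `S`, with lifted mass `M = ∫_S g r³ dr dz`, and let
`G(x',z) = g(|x'|,z)` be its SO(4)-radial lift to `ℝ⁵`. If `r₀ ≥ 10λ > 0` and
`X₀ ∈ ℝ⁵` has axis-distance `r₀`, then the integral of `G` over the Euclidean
ball `B_λ(X₀) ⊂ ℝ⁵` is at most `C (λ/r₀)³ · 2π² M` for an absolute constant `C`. -/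
theorem ring_capture :
    ∃ C : ℝ, 0 < C ∧
      ∀ (g : ℝ × ℝ → ℝ≥0∞) (S : Set (ℝ × ℝ)) (M : ℝ≥0∞)
        (r₀ lam : ℝ) (X₀ : EuclideanSpace ℝ (Fin 5)),
        Measurable g → MeasurableSet S →
        (∀ p ∉ S, g p = 0) →
        M = ∫⁻ p in S, g p * ENNReal.ofReal (p.1 ^ 3) ∂volume →
        0 < lam → 10 * lam ≤ r₀ →
        rad5 X₀ = r₀ →
        ∫⁻ x in Metric.ball X₀ lam, g (rad5 x, ht5 x) ∂volume
          ≤ ENNReal.ofReal (C * (lam / r₀) ^ 3 * (2 * Real.pi ^ 2)) * M := by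
  refine ⟨64, by norm_num, ?_⟩
  intro g S M r₀ lam X₀ hg hS hgS hM hlam hr hrad
  have hr₀ : 0 < r₀ := by linarith
  -- coordinate measurability on E5
  have hcoord : ∀ i : Fin 5, Measurable fun x : EuclideanSpace ℝ (Fin 5) => x i := fun i =>
    (measurable_pi_apply i).comp ((MeasurableEquiv.toLp 2 (Fin 5 → ℝ)).symm).measurable
  have hrad5m : Measurable rad5 := by
    apply Measurable.sqrt
    exact Finset.measurable_sum _ (fun i _ => (hcoord i.castSucc).pow_const 2)
  have hht5m : Measurable ht5 := hcoord 4
  have hfm : Measurable fun x : EuclideanSpace ℝ (Fin 5) => g (rad5 x, ht5 x) :=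
    hg.comp (hrad5m.prodMk hht5m)
  -- the center in R^4
  set c : E4' := ((MeasurableEquiv.toLp 2 (Fin 4 → ℝ)).symm).symm (fun i => X₀ i.castSucc) with hcdef
  have hcapp : ∀ i, c i = X₀ i.castSucc := fun i => rfl
  have hc : ‖c‖ = r₀ := by
    rw [EuclideanSpace.norm_eq]
    simp only [hcapp, Real.norm_eq_abs, sq_abs]
    exact hrad
  -- the projection to R^4 and the enlarged set U
  set π4 : EuclideanSpace ℝ (Fin 5) → E4' :=
    fun x => ((MeasurableEquiv.toLp 2 (Fin 4 → ℝ)).symm).symm (fun i => x i.castSucc) with hπ4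
  have hπ4m : Measurable π4 :=
    ((MeasurableEquiv.toLp 2 (Fin 4 → ℝ)).symm).symm.measurable.comp
      (measurable_pi_lambda _ (fun i => hcoord i.castSucc))
  set U : Set (EuclideanSpace ℝ (Fin 5)) := π4 ⁻¹' (Metric.ball c lam) with hU
  have hUm : MeasurableSet U := measurableSet_ball.preimage hπ4m
  have hballU : Metric.ball X₀ lam ⊆ U := by
    intro x hx
    rw [Metric.mem_ball] at hx
    rw [hU, mem_preimage, Metric.mem_ball]
    rw [EuclideanSpace.dist_eq] at hx ⊢
    refine lt_of_le_of_lt ?_ hx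
    apply Real.sqrt_le_sqrt
    rw [Fin.sum_univ_castSucc (n := 4)]
    have : ∀ i : Fin 4, dist (π4 x i) (c i) ^ 2 = dist (x i.castSucc) (X₀ i.castSucc) ^ 2 :=
      fun i => rfl
    rw [Finset.sum_congr rfl (fun i _ => this i)]
    nlinarith [sq_nonneg (dist (x (Fin.last 4)) (X₀ (Fin.last 4)))]
  -- the full measure-preserving map E5 ≃ ℝ × (Fin 4 → ℝ)
  set Φ : EuclideanSpace ℝ (Fin 5) ≃ᵐ ℝ × (Fin 4 → ℝ) :=
    ((MeasurableEquiv.toLp 2 (Fin 5 → ℝ)).symm).trans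
      (MeasurableEquiv.piFinSuccAbove (fun _ : Fin 5 => ℝ) (Fin.last 4)) with hΦ
  have mpΦ : MeasurePreserving Φ volume volume :=
    (volume_preserving_piFinSuccAbove (fun _ : Fin 5 => ℝ) (Fin.last 4)).comp
      (EuclideanSpace.volume_preserving_symm_measurableEquiv_toLp (Fin 5))
  have mpΦs : MeasurePreserving Φ.symm volume volume := mpΦ.symm Φ
  -- identify the composition
  have hΦsymm : ∀ (z : ℝ) (y : Fin 4 → ℝ),
      (U.indicator (fun x => g (rad5 x, ht5 x))) (Φ.symm (z, y))
        = (Metric.ball c lam).indicator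
            (fun w : E4' => g (‖w‖, z)) (((MeasurableEquiv.toLp 2 (Fin 4 → ℝ)).symm).symm y) := by
    intro z y
    set x : EuclideanSpace ℝ (Fin 5) := Φ.symm (z, y) with hx
    set w : E4' := ((MeasurableEquiv.toLp 2 (Fin 4 → ℝ)).symm).symm y with hw
    have hxc : ∀ i : Fin 4, x i.castSucc = y i := by
      intro i
      show (Fin.insertNthEquiv (fun _ : Fin 5 => ℝ) (Fin.last 4)) (z, y) i.castSucc = y i
      rw [Fin.insertNthEquiv_apply]
      rw [show i.castSucc = (Fin.last 4).succAbove i from (Fin.succAbove_last_apply i).symm]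
      exact Fin.insertNth_apply_succAbove _ _ _ _
    have hx4 : x 4 = z := by
      show (Fin.insertNthEquiv (fun _ : Fin 5 => ℝ) (Fin.last 4)) (z, y) 4 = z
      rw [Fin.insertNthEquiv_apply]
      exact Fin.insertNth_apply_same _ _ _
    have hrad5x : rad5 x = ‖w‖ := by
      rw [EuclideanSpace.norm_eq]
      show Real.sqrt (∑ i : Fin 4, x i.castSucc ^ 2) = _
      simp only [Real.norm_eq_abs, sq_abs]
      simp only [hxc]
      rfl
    have hht5x : ht5 x = z := hx4
    have hπ4x : π4 x = w := by
      rw [hπ4, hw]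
      beta_reduce
      congr 1
      funext i
      exact hxc i
    by_cases hmem : w ∈ Metric.ball c lam
    · rw [indicator_of_mem hmem]
      have : x ∈ U := by rw [hU, mem_preimage, hπ4x]; exact hmem
      rw [indicator_of_mem this, hrad5x, hht5x]
    · rw [indicator_of_notMem hmem]
      have : x ∉ U := by rw [hU, mem_preimage, hπ4x]; exact hmem
      rw [indicator_of_notMem this]
  -- the main chain
  have hJm : Measurable fun z : ℝ =>
      ∫⁻ r in Ioi (0:ℝ), g (r, z) * ENNReal.ofReal (r ^ 3) ∂volume := by
    apply Measurable.lintegral_prod_right (ν := volume.restrict (Ioi 0))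
    exact (hg.comp measurable_swap).mul ((measurable_snd.pow_const 3).ennreal_ofReal)
  have keymul : ENNReal.ofReal (256 * (lam / r₀) ^ 3)
      ≤ ENNReal.ofReal (64 * (lam / r₀) ^ 3 * (2 * Real.pi ^ 2)) := by
    apply ENNReal.ofReal_le_ofReal
    have ht : (0:ℝ) ≤ (lam / r₀) ^ 3 := by positivity
    have hpi2 : (9:ℝ) ≤ Real.pi ^ 2 := by nlinarith [Real.pi_gt_three]
    nlinarith [mul_le_mul_of_nonneg_left hpi2 ht]
  calc ∫⁻ x in Metric.ball X₀ lam, g (rad5 x, ht5 x) ∂volume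
      ≤ ∫⁻ x in U, g (rad5 x, ht5 x) ∂volume := lintegral_mono_set hballU
    _ = ∫⁻ x, U.indicator (fun x => g (rad5 x, ht5 x)) x ∂volume :=
        (lintegral_indicator hUm _).symm
    _ = ∫⁻ q : ℝ × (Fin 4 → ℝ), U.indicator (fun x => g (rad5 x, ht5 x)) (Φ.symm q) ∂volume :=
        (mpΦs.lintegral_comp (hfm.indicator hUm)).symm
    _ = ∫⁻ z : ℝ, ∫⁻ y : Fin 4 → ℝ,
          U.indicator (fun x => g (rad5 x, ht5 x)) (Φ.symm (z, y)) ∂volume ∂volume := by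
        rw [Measure.volume_eq_prod, lintegral_prod]
        exact ((hfm.indicator hUm).comp Φ.symm.measurable).aemeasurable
    _ = ∫⁻ z : ℝ, ∫⁻ y : Fin 4 → ℝ,
          (Metric.ball c lam).indicator (fun w : E4' => g (‖w‖, z))
            (((MeasurableEquiv.toLp 2 (Fin 4 → ℝ)).symm).symm y) ∂volume ∂volume := by
        congr 1; funext z; congr 1; funext y; exact hΦsymm z y
    _ = ∫⁻ z : ℝ, ∫⁻ w in Metric.ball c lam, g (‖w‖, z) ∂volume ∂volume := by
        congr 1; funext z
        rw [← lintegral_indicator measurableSet_ball _]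
        exact ((EuclideanSpace.volume_preserving_symm_measurableEquiv_toLp (Fin 4)).symm
            ((MeasurableEquiv.toLp 2 (Fin 4 → ℝ)).symm)).lintegral_comp
          (((hg.comp ((continuous_norm.measurable).prodMk measurable_const)).indicator
            measurableSet_ball))
    _ ≤ ∫⁻ z : ℝ, ENNReal.ofReal (256 * (lam / r₀) ^ 3)
          * ∫⁻ r in Ioi (0:ℝ), g (r, z) * ENNReal.ofReal (r ^ 3) ∂volume ∂volume := by
        apply lintegral_mono
        intro z
        exact ball_lintegral_le (fun r => g (r, z))
          (hg.comp (measurable_id.prodMk measurable_const)) c hlam hr hc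
    _ = ENNReal.ofReal (256 * (lam / r₀) ^ 3)
          * ∫⁻ z : ℝ, ∫⁻ r in Ioi (0:ℝ), g (r, z) * ENNReal.ofReal (r ^ 3) ∂volume ∂volume := by
        rw [lintegral_const_mul _ hJm]
    _ ≤ ENNReal.ofReal (256 * (lam / r₀) ^ 3)
          * ∫⁻ z : ℝ, ∫⁻ r : ℝ, g (r, z) * ENNReal.ofReal (r ^ 3) ∂volume ∂volume := by
        apply mul_le_mul_right
        exact lintegral_mono fun z => setLIntegral_le_lintegral _ _
    _ = ENNReal.ofReal (256 * (lam / r₀) ^ 3) * M := by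
        congr 1
        rw [lintegral_lintegral_swap]
        · rw [hM]
          have : ∀ p : ℝ × ℝ, S.indicator (fun p => g p * ENNReal.ofReal (p.1 ^ 3)) p
              = g p * ENNReal.ofReal (p.1 ^ 3) := by
            intro p
            by_cases hp : p ∈ S
            · rw [indicator_of_mem hp]
            · rw [indicator_of_notMem hp, hgS p hp, zero_mul]
          rw [← lintegral_indicator hS]
          rw [lintegral_congr this]
          rw [Measure.volume_eq_prod, lintegral_prod]
          exact (hg.mul ((measurable_fst.pow_const 3).ennreal_ofReal)).aemeasurable
        · exact ((hg.comp measurable_swap).mul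
            ((measurable_snd.pow_const 3).ennreal_ofReal)).aemeasurable
    _ ≤ ENNReal.ofReal (64 * (lam / r₀) ^ 3 * (2 * Real.pi ^ 2)) * M :=
        mul_le_mul_left keymul _
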